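/- If a countable collection C = {L_1, L_2, ...} of infinite languages over U can be generated with breadth in the limit by some algorithm, then C satisfies Angluin's Condition with Existence. -/

import Mathlib

/-!
STATEMENT 8: If a countable collection C = {L_1, L_2, ...} of infinite languages over
U can be generated with breadth in the limit by some algorithm, then C satisfies
Angluin's Condition with Existence.
-/

/-- `x` is an enumeration of the language `K`. -/
def IsEnumerationOf {U : Type} (K : Set U) (x : ℕ → U) : Prop :=
  (∀ t, x t ∈ K) ∧ ∀ w ∈ K, ∃ t, x t = w

/-- The input prefix `(x_1, ..., x_t)` as a list. -/
def inputList {U : Type} (x : ℕ → U) (t : ℕ) : List U :=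
  List.ofFn (fun i : Fin t => x i)

/-- `Z_{≥t}`: the distinct strings in `G_t(1), G_t(2), ...`. -/
def ZgeSet {U : Type} (A : List U → ℕ → U) (x : ℕ → U) (t : ℕ) : Set U :=
  Set.range (A (inputList x t))

/-- The algorithm `A` generates with breadth in the limit from the collection `C`. -/
def GeneratesWithBreadth {U : Type} (A : List U → ℕ → U) (C : Set (Set U)) : Prop :=
  ∀ K ∈ C, ∀ x : ℕ → U, IsEnumerationOf K x →
    ∃ tstar : ℕ, ∀ t : ℕ, tstar ≤ t → ZgeSet A x t = K

/-- Angluin's Condition with Existence. -/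
def AngluinExistence {U : Type} (C : Set (Set U)) : Prop :=
  ∀ L ∈ C, ∃ T : Set U, T.Finite ∧ T ⊆ L ∧ ∀ L' ∈ C, T ⊆ L' → ¬ L' ⊂ L

/-- an infinite set in a countable universe has an enumeration -/
lemma exists_enum {U : Type} [Countable U] {S : Set U} (hS : S.Infinite) :
    ∃ z : ℕ → U, IsEnumerationOf S z := by
  obtain ⟨f, hf⟩ := (Set.to_countable S).exists_eq_range hS.nonempty
  exact ⟨f, fun t => hf ▸ Set.mem_range_self t, fun w hw => by
    rw [hf] at hw; exact hw⟩

lemma step_lemma {U : Type} [Countable U] {A : List U → ℕ → U} {C : Set (Set U)}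
    (hA : GeneratesWithBreadth A C) {K : Set U}
    (hbad : ∀ T : Set U, T.Finite → T ⊆ K → ∃ L' ∈ C, T ⊆ L' ∧ L' ⊂ K)
    (hCinf : ∀ S ∈ C, S.Infinite)
    (p : List U) (hp : ∀ a ∈ p, a ∈ K) :
    ∃ q : List U, p <+: q ∧ (∀ a ∈ q, a ∈ K) ∧ Set.range (A q) ≠ K := by
  obtain ⟨L', hL'C, hTL', hlt⟩ := hbad {a | a ∈ p} p.finite_toSet hp
  obtain ⟨z, hz1, hz2⟩ := exists_enum (hCinf L' hL'C)
  set x : ℕ → U := fun i => if h : i < p.length then p.get ⟨i, h⟩ else z (i - p.length) with hx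
  have hxmem : ∀ i, x i ∈ L' := by
    intro i
    by_cases h : i < p.length
    · simpa [hx, h] using hTL' (p.get_mem ⟨i, h⟩)
    · simpa [hx, h] using hz1 (i - p.length)
  have henum : IsEnumerationOf L' x := by
    refine ⟨hxmem, fun w hw => ?_⟩
    obtain ⟨n, hn⟩ := hz2 w hw
    refine ⟨n + p.length, ?_⟩
    have : ¬ (n + p.length < p.length) := by omega
    simp [hx, this, hn]
  obtain ⟨tstar, ht⟩ := hA L' hL'C x henum
  set t := max tstar p.length with htdef
  refine ⟨inputList x t, ?_, ?_, ?_⟩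
  · -- p is a prefix
    rw [List.prefix_iff_eq_take]
    apply List.ext_get
    · simp [inputList, htdef]
    · intro i h1 h2
      have hip : i < p.length := by simpa using h1
      have hit : i < t := lt_of_lt_of_le hip (le_max_right _ _)
      simp [inputList, List.getElem_take, hip, hit, hx]
  · intro a ha
    rw [inputList, List.mem_ofFn] at ha
    obtain ⟨i, rfl⟩ := ha
    exact hlt.subset (hxmem i)
  · have := ht t (le_max_left _ _)
    rw [ZgeSet] at this
    rw [this]
    exact hlt.ne

variable {U : Type} [Countable U] [Infinite U]

theorem breadth_implies_angluin_existence
    (U : Type) [Countable U] [Infinite U]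
    (L : ℕ → Set U) (hL : ∀ i, (L i).Infinite)
    (h : ∃ A : List U → ℕ → U, GeneratesWithBreadth A (Set.range L)) :
    AngluinExistence (Set.range L) := by
  obtain ⟨A, hA⟩ := h
  intro K hK
  by_contra hcon
  push_neg at hcon
  have hbad : ∀ T : Set U, T.Finite → T ⊆ K → ∃ L' ∈ Set.range L, T ⊆ L' ∧ L' ⊂ K := hcon
  have hCinf : ∀ S ∈ Set.range L, S.Infinite := by
    rintro S ⟨i, rfl⟩; exact hL i
  have hKinf : K.Infinite := hCinf K hK
  obtain ⟨e, he1, he2⟩ := exists_enum hKinf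
  -- the step function
  have hstep := fun (p : List U) (hp : ∀ a ∈ p, a ∈ K) =>
    step_lemma hA hbad hCinf p hp
  classical
  let g : List U → List U := fun p =>
    if hp : ∀ a ∈ p, a ∈ K then Classical.choose (hstep p hp) else []
  -- the stages
  let P : ℕ → List U := fun n => Nat.rec [] (fun n pn => g (pn ++ [e n])) n
  have hPsucc : ∀ n, P (n + 1) = g (P n ++ [e n]) := fun n => rfl
  have hPmem : ∀ n, ∀ a ∈ P n, a ∈ K := by
    intro n
    induction n with
    | zero => intro a ha; simp [P] at ha
    | succ n ih =>
      have hp : ∀ a ∈ P n ++ [e n], a ∈ K := by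
        intro a ha
        rcases List.mem_append.mp ha with h1 | h1
        · exact ih a h1
        · simp at h1; subst h1; exact he1 n
      rw [hPsucc n]
      simp only [g, dif_pos hp]
      exact (Classical.choose_spec (hstep _ hp)).2.1
  have hPspec : ∀ n, (P n ++ [e n]) <+: P (n + 1) ∧ Set.range (A (P (n + 1))) ≠ K := by
    intro n
    have hp : ∀ a ∈ P n ++ [e n], a ∈ K := by
      intro a ha
      rcases List.mem_append.mp ha with h1 | h1
      · exact hPmem n a h1
      · simp at h1; subst h1; exact he1 n
    have := Classical.choose_spec (hstep _ hp)
    rw [hPsucc n]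
    simp only [g, dif_pos hp]
    exact ⟨this.1, this.2.2⟩
  have hchain : ∀ m n, m ≤ n → P m <+: P n := by
    intro m n hmn
    induction n with
    | zero => simp_all
    | succ n ih =>
      rcases Nat.lt_or_ge m (n+1) with h1 | h1
      · exact (ih (by omega)).trans (((P n).prefix_append [e n]).trans (hPspec n).1)
      · have : m = n + 1 := by omega
        subst this; exact List.prefix_refl _
  have hlen : ∀ n, n ≤ (P n).length := by
    intro n
    induction n with
    | zero => simp
    | succ n ih =>
      have := (hPspec n).1.length_le
      simp at this; omega
  have hne : Nonempty U := inferInstance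
  let d : U := Classical.choice hne
  -- consistency of getD along the chain
  have hconsist : ∀ m n k, k < (P m).length → k < (P n).length →
      (P m).getD k d = (P n).getD k d := by
    have key : ∀ m n k, m ≤ n → k < (P m).length → (P m).getD k d = (P n).getD k d := by
      intro m n k hmn hk
      obtain ⟨r, hr⟩ := hchain m n hmn
      rw [← hr, List.getD_append _ _ _ _ hk]
    intro m n k h1 h2
    rcases le_total m n with h | h
    · exact key m n k h h1
    · exact (key n m k h h2).symm
  -- the diagonal enumeration
  let x : ℕ → U := fun k => (P (k + 1)).getD k d
  have hxk : ∀ k, k < (P (k+1)).length := fun k => lt_of_lt_of_le (by omega) (hlen (k+1))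
  have hxP : ∀ n k, k < (P n).length → x k = (P n).getD k d := by
    intro n k hk
    exact hconsist (k+1) n k (hxk k) hk
  have hxmem : ∀ k, x k ∈ K := by
    intro k
    have := hxk k
    have : x k ∈ P (k+1) := by
      rw [show x k = (P (k+1)).getD k d from rfl, List.getD_eq_getElem _ _ this]
      exact List.getElem_mem this
    exact hPmem (k+1) _ this
  have henum : IsEnumerationOf K x := by
    refine ⟨hxmem, fun w hw => ?_⟩
    obtain ⟨m, hm⟩ := he2 w hw
    have hmem : w ∈ P (m+1) := (hPspec m).1.subset (by simp [hm])
    obtain ⟨j, hj, hjw⟩ := List.getElem_of_mem hmem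
    refine ⟨j, ?_⟩
    rw [hxP (m+1) j hj, List.getD_eq_getElem _ _ hj, hjw]
  -- prefix of x of length (P n).length equals P n
  have hinput : ∀ n, inputList x ((P n).length) = P n := by
    intro n
    apply List.ext_get
    · simp [inputList]
    · intro i h1 h2
      have hi : i < (P n).length := by simpa [inputList] using h1
      simp only [inputList, List.get_ofFn]
      rw [List.get_eq_getElem, ← List.getD_eq_getElem _ d h2]
      exact hxP n i hi
  obtain ⟨tstar, ht⟩ := hA K hK x henum
  have h1 : ZgeSet A x ((P (tstar+1)).length) = K :=
    ht _ (le_trans (by omega) (hlen (tstar+1)))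
  rw [ZgeSet, hinput (tstar+1)] at h1
  exact (hPspec tstar).2 h1
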